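/- Let k be a field and p, q, m, s, t natural numbers. In the polynomial ring R = k[x_p,…,x_{m+p+q}, y_0,…,y_{m+p}] (so with m+q+1 variables x_p,…,x_{m+p+q} and m+p+1 variables y_0,…,y_{m+p}), let I be the ideal generated by the binomials x_i·y_j − x_j·y_i for all p ≤ i, j ≤ m+p. Then the k-dimension of the bidegree-(s,t) graded piece of R/I, plus Σ_{ℓ=0}^{m−1} C(s+q+ℓ, q+ℓ)·C(t+p+m−1−ℓ, p+m−1−ℓ), equals Σ_{ℓ=0}^{m} C(s+q+ℓ, q+ℓ)·C(t+p+m−ℓ, p+m−ℓ). (Here C(a,b) denotes the binomial coefficient, and for m = 0 the first sum is empty.) -/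

import Mathlib

open MvPolynomial

/-- The k-subspace of the polynomial ring `k[x_σ, y_τ]` spanned by the bihomogeneous
polynomials of bidegree `(s, t)`, where each `x` variable has bidegree `(1,0)` and each
`y` variable has bidegree `(0,1)`. -/
noncomputable def bidegPiece (k : Type*) [Field k] (σ τ : Type*) [Fintype σ] [Fintype τ]
    (s t : ℕ) : Submodule k (MvPolynomial (σ ⊕ τ) k) :=
  Submodule.span k {P : MvPolynomial (σ ⊕ τ) k |
    ∀ d ∈ P.support, (∑ i : σ, d (Sum.inl i)) = s ∧ (∑ j : τ, d (Sum.inr j)) = t}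

open Finset


section Defs

/-- x-variable with index clamped. -/
def xv (p q m i : ℕ) : Fin (m + q + 1) ⊕ Fin (m + p + 1) :=
  Sum.inl ⟨min i (m + q), by omega⟩

/-- y-variable (shifted index) with index clamped. -/
def yv (p q m i : ℕ) : Fin (m + q + 1) ⊕ Fin (m + p + 1) :=
  Sum.inr ⟨p + min i m, by omega⟩

/-- y-variable (absolute index) with index clamped. -/
def zv (p q m j : ℕ) : Fin (m + q + 1) ⊕ Fin (m + p + 1) :=
  Sum.inr ⟨min j (m + p), by omega⟩

def Std (p q m : ℕ) (d : Fin (m + q + 1) ⊕ Fin (m + p + 1) →₀ ℕ) : Prop :=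
  ∀ i j : ℕ, i < j → j ≤ m → d (xv p q m j) = 0 ∨ d (yv p q m i) = 0

/-- The ordering measure used for the straightening rewriting. -/
def Meas (p q m : ℕ) (d : Fin (m + q + 1) ⊕ Fin (m + p + 1) →₀ ℕ) : ℕ :=
  ∑ r ∈ range (m + 1), (r * d (xv p q m r) + (m - r) * d (yv p q m r))

variable {p q m : ℕ}

lemma xv_eq {i : ℕ} (h : i ≤ m + q) : xv p q m i = Sum.inl ⟨i, by omega⟩ := by
  simp [xv, Nat.min_eq_left h]

lemma yv_eq {i : ℕ} (h : i ≤ m) : yv p q m i = Sum.inr ⟨p + i, by omega⟩ := by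
  simp [yv, Nat.min_eq_left h]

lemma zv_eq {j : ℕ} (h : j ≤ m + p) : zv p q m j = Sum.inr ⟨j, by omega⟩ := by
  simp [zv, Nat.min_eq_left h]

lemma xv_inj_iff {i j : ℕ} (hi : i ≤ m + q) (hj : j ≤ m + q) :
    xv p q m i = xv p q m j ↔ i = j := by
  rw [xv_eq hi, xv_eq hj]
  constructor
  · intro h
    simpa using congrArg Fin.val (Sum.inl.inj h)
  · rintro rfl; rfl

lemma yv_inj_iff {i j : ℕ} (hi : i ≤ m) (hj : j ≤ m) :
    yv p q m i = yv p q m j ↔ i = j := by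
  rw [yv_eq hi, yv_eq hj]
  constructor
  · intro h
    have := congrArg Fin.val (Sum.inr.inj h)
    simp at this
    omega
  · rintro rfl; rfl

lemma xv_ne_yv (i j : ℕ) : xv p q m i ≠ yv p q m j := by
  simp [xv, yv]

/-- x-degree as a range sum. -/
lemma degX_range (d : Fin (m + q + 1) ⊕ Fin (m + p + 1) →₀ ℕ) :
    (∑ i : Fin (m + q + 1), d (Sum.inl i)) = ∑ i ∈ range (m + q + 1), d (xv p q m i) := by
  rw [Finset.sum_range fun i => d (xv p q m i)]
  apply Finset.sum_congr rfl
  intro i _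
  congr 1
  rw [xv_eq (by omega)]

lemma degY_range (d : Fin (m + q + 1) ⊕ Fin (m + p + 1) →₀ ℕ) :
    (∑ j : Fin (m + p + 1), d (Sum.inr j))
      = (∑ j ∈ range p, d (zv p q m j)) + ∑ j ∈ range (m + 1), d (yv p q m j) := by
  have h1 : (∑ j : Fin (m + p + 1), d (Sum.inr j))
      = ∑ j ∈ range (m + p + 1), d (zv p q m j) := by
    rw [Finset.sum_range fun j => d (zv p q m j)]
    apply Finset.sum_congr rfl
    intro j _
    congr 1
    rw [zv_eq (by omega)]
  rw [h1, ← Finset.sum_range_add_sum_Ico _ (show p ≤ m + p + 1 by omega)]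
  congr 1
  rw [Finset.sum_Ico_eq_sum_range]
  have hmp : m + p + 1 - p = m + 1 := by omega
  rw [hmp]
  apply Finset.sum_congr rfl
  intro j hj
  simp only [mem_range] at hj
  congr 1
  rw [zv_eq (by omega), yv_eq (by omega)]

end Defs
section Sums

variable {p q m : ℕ}

/-- Evaluating sums of a `single` along the x-variables. -/
lemma sumX_single_x {a : ℕ} (ha : a ≤ m + q) (n : ℕ) :
    (∑ r ∈ range (m + q + 1), (Finsupp.single (xv p q m a) n) (xv p q m r)) = n := by
  have : ∀ r ∈ range (m + q + 1),
      (Finsupp.single (xv p q m a) n) (xv p q m r) = if r = a then n else 0 := by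
    intro r hr
    simp only [mem_range] at hr
    rw [Finsupp.single_apply]
    by_cases h : r = a
    · subst h; simp
    · rw [if_neg (fun hc => h ((xv_inj_iff (by omega) ha).1 hc.symm)), if_neg h]
  rw [Finset.sum_congr rfl this, Finset.sum_ite_eq' (range (m + q + 1)) a fun _ => n,
    if_pos (by simp; omega)]

lemma sumX_single_y (a n : ℕ) :
    (∑ r ∈ range (m + q + 1), (Finsupp.single (yv p q m a) n) (xv p q m r)) = 0 := by
  apply Finset.sum_eq_zero
  intro r _
  rw [Finsupp.single_apply, if_neg (fun hc => xv_ne_yv r a hc.symm)]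

lemma sumY_single_x (a n : ℕ) :
    (∑ r ∈ range (m + 1), (Finsupp.single (xv p q m a) n) (yv p q m r)) = 0 := by
  apply Finset.sum_eq_zero
  intro r _
  rw [Finsupp.single_apply, if_neg (xv_ne_yv a r)]

lemma sumY_single_y {a : ℕ} (ha : a ≤ m) (n : ℕ) :
    (∑ r ∈ range (m + 1), (Finsupp.single (yv p q m a) n) (yv p q m r)) = n := by
  have : ∀ r ∈ range (m + 1),
      (Finsupp.single (yv p q m a) n) (yv p q m r) = if r = a then n else 0 := by
    intro r hr
    simp only [mem_range] at hr
    rw [Finsupp.single_apply]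
    by_cases h : r = a
    · subst h; simp
    · rw [if_neg (fun hc => h ((yv_inj_iff (by omega) ha).1 hc.symm)), if_neg h]
  rw [Finset.sum_congr rfl this, Finset.sum_ite_eq' (range (m + 1)) a fun _ => n,
    if_pos (by simp; omega)]

lemma sumZ_single_x (a n : ℕ) :
    (∑ r ∈ range p, (Finsupp.single (xv p q m a) n) (zv p q m r)) = 0 := by
  apply Finset.sum_eq_zero
  intro r _
  rw [Finsupp.single_apply, if_neg (by simp [xv, zv])]

lemma sumZ_single_y (a n : ℕ) :
    (∑ r ∈ range p, (Finsupp.single (yv p q m a) n) (zv p q m r)) = 0 := by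
  apply Finset.sum_eq_zero
  intro r hr
  simp only [mem_range] at hr
  rw [Finsupp.single_apply]
  apply if_neg
  intro hc
  have := congrArg Fin.val (Sum.inr.inj hc)
  simp only [yv, zv] at this ⊢
  omega

lemma meas_single_x {a : ℕ} (ha : a ≤ m) (n : ℕ) :
    Meas p q m (Finsupp.single (xv p q m a) n) = a * n := by
  unfold Meas
  have : ∀ r ∈ range (m + 1),
      (r * (Finsupp.single (xv p q m a) n) (xv p q m r)
        + (m - r) * (Finsupp.single (xv p q m a) n) (yv p q m r))
      = if r = a then a * n else 0 := by
    intro r hr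
    simp only [mem_range] at hr
    rw [Finsupp.single_apply, Finsupp.single_apply, if_neg (xv_ne_yv a r)]
    by_cases h : r = a
    · subst h; simp
    · rw [if_neg (fun hc => h ((xv_inj_iff (by omega) (by omega)).1 hc.symm))]
      simp [h]
  rw [Finset.sum_congr rfl this, Finset.sum_ite_eq' (range (m + 1)) a fun _ => a * n,
    if_pos (by simp; omega)]

lemma meas_single_y {a : ℕ} (ha : a ≤ m) (n : ℕ) :
    Meas p q m (Finsupp.single (yv p q m a) n) = (m - a) * n := by
  unfold Meas
  have : ∀ r ∈ range (m + 1),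
      (r * (Finsupp.single (yv p q m a) n) (xv p q m r)
        + (m - r) * (Finsupp.single (yv p q m a) n) (yv p q m r))
      = if r = a then (m - a) * n else 0 := by
    intro r hr
    simp only [mem_range] at hr
    rw [Finsupp.single_apply, Finsupp.single_apply,
      if_neg (fun hc => xv_ne_yv r a hc.symm)]
    by_cases h : r = a
    · subst h; simp
    · rw [if_neg (fun hc => h ((yv_inj_iff (by omega) ha).1 hc.symm))]
      simp [h]
  rw [Finset.sum_congr rfl this, Finset.sum_ite_eq' (range (m + 1)) a fun _ => (m - a) * n,
    if_pos (by simp; omega)]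

lemma meas_add (d e : Fin (m + q + 1) ⊕ Fin (m + p + 1) →₀ ℕ) :
    Meas p q m (d + e) = Meas p q m d + Meas p q m e := by
  unfold Meas
  rw [← Finset.sum_add_distrib]
  apply Finset.sum_congr rfl
  intro r _
  simp [Finsupp.add_apply, Nat.mul_add]
  ring

end Sums
section Reduce

variable {k : Type*} [Field k] {p q m : ℕ}
  {I : Ideal (MvPolynomial (Fin (m + q + 1) ⊕ Fin (m + p + 1)) k)}

/-- Membership of the generators in `I`. -/
lemma gen_mem (hI : I = Ideal.span {f | ∃ i j : Fin (m + 1),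
      f = X (Sum.inl ⟨(i : ℕ), by have := Nat.succ_le_of_lt i.isLt; omega⟩)
            * X (Sum.inr ⟨p + (j : ℕ), by have := Nat.succ_le_of_lt j.isLt; omega⟩)
          - X (Sum.inl ⟨(j : ℕ), by have := Nat.succ_le_of_lt j.isLt; omega⟩)
            * X (Sum.inr ⟨p + (i : ℕ), by have := Nat.succ_le_of_lt i.isLt; omega⟩)})
    {i j : ℕ} (hi : i ≤ m) (hj : j ≤ m) :
    (X (xv p q m i) * X (yv p q m j) - X (xv p q m j) * X (yv p q m i)
      : MvPolynomial (Fin (m + q + 1) ⊕ Fin (m + p + 1)) k) ∈ I := by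
  subst hI
  apply Ideal.subset_span
  refine ⟨⟨i, by omega⟩, ⟨j, by omega⟩, ?_⟩
  rw [xv_eq (by omega : i ≤ m + q), xv_eq (by omega : j ≤ m + q), yv_eq hi, yv_eq hj]

lemma decomp (d : Fin (m + q + 1) ⊕ Fin (m + p + 1) →₀ ℕ) {i j : ℕ}
    (h1 : d (xv p q m j) ≠ 0) (h2 : d (yv p q m i) ≠ 0) :
    ∃ e, d = e + Finsupp.single (xv p q m j) 1 + Finsupp.single (yv p q m i) 1 := by
  classical
  refine ⟨d - Finsupp.single (xv p q m j) 1 - Finsupp.single (yv p q m i) 1, ?_⟩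
  ext v
  simp only [Finsupp.add_apply, Finsupp.tsub_apply, Finsupp.single_apply]
  by_cases hv1 : xv p q m j = v
  · have hv2 : ¬ (yv p q m i = v) := fun hc => xv_ne_yv j i (hv1.trans hc.symm)
    have : d v ≠ 0 := hv1 ▸ h1
    simp only [if_pos hv1, if_neg hv2]
    omega
  · by_cases hv2 : yv p q m i = v
    · have : d v ≠ 0 := hv2 ▸ h2
      simp only [if_neg hv1, if_pos hv2]
      omega
    · simp [if_neg hv1, if_neg hv2]

lemma monomial_decomp (e : Fin (m + q + 1) ⊕ Fin (m + p + 1) →₀ ℕ)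
    (a b : Fin (m + q + 1) ⊕ Fin (m + p + 1)) :
    (monomial (e + Finsupp.single a 1 + Finsupp.single b 1) 1
      : MvPolynomial (Fin (m + q + 1) ⊕ Fin (m + p + 1)) k)
      = monomial e 1 * (X a * X b) := by
  rw [X, X, monomial_mul, monomial_mul, one_mul, one_mul]
  exact congrArg (fun u => (monomial u) (1 : k)) (add_assoc _ _ _)

/-- Straightening: every monomial is congruent mod `I` to a standard one of the
same bidegree. -/
lemma reduce (hI : I = Ideal.span {f | ∃ i j : Fin (m + 1),
      f = X (Sum.inl ⟨(i : ℕ), by have := Nat.succ_le_of_lt i.isLt; omega⟩)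
            * X (Sum.inr ⟨p + (j : ℕ), by have := Nat.succ_le_of_lt j.isLt; omega⟩)
          - X (Sum.inl ⟨(j : ℕ), by have := Nat.succ_le_of_lt j.isLt; omega⟩)
            * X (Sum.inr ⟨p + (i : ℕ), by have := Nat.succ_le_of_lt i.isLt; omega⟩)}) :
    ∀ (n : ℕ) (d : Fin (m + q + 1) ⊕ Fin (m + p + 1) →₀ ℕ), Meas p q m d ≤ n →
    ∃ d', Std p q m d'
      ∧ (∑ i ∈ range (m + q + 1), d' (xv p q m i)) = (∑ i ∈ range (m + q + 1), d (xv p q m i))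
      ∧ (∑ j ∈ range p, d' (zv p q m j)) = (∑ j ∈ range p, d (zv p q m j))
      ∧ (∑ j ∈ range (m + 1), d' (yv p q m j)) = (∑ j ∈ range (m + 1), d (yv p q m j))
      ∧ (monomial d 1 - monomial d' 1
          : MvPolynomial (Fin (m + q + 1) ⊕ Fin (m + p + 1)) k) ∈ I := by
  intro n
  induction n with
  | zero =>
    intro d hd
    by_cases hstd : Std p q m d
    · exact ⟨d, hstd, rfl, rfl, rfl, by rw [sub_self]; exact I.zero_mem⟩
    · exfalso
      rw [Std] at hstd
      push_neg at hstd
      obtain ⟨i, j, hij, hj, h1, h2⟩ := hstd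
      obtain ⟨e, he⟩ := decomp d h1 h2
      have := meas_add (p := p) (q := q) (m := m)
      rw [he, meas_add, meas_add, meas_single_x hj 1, meas_single_y (by omega : i ≤ m) 1] at hd
      omega
  | succ n ih =>
    intro d hd
    by_cases hstd : Std p q m d
    · exact ⟨d, hstd, rfl, rfl, rfl, by rw [sub_self]; exact I.zero_mem⟩
    · rw [Std] at hstd
      push_neg at hstd
      obtain ⟨i, j, hij, hj, h1, h2⟩ := hstd
      have hi : i ≤ m := by omega
      obtain ⟨e, he⟩ := decomp d h1 h2
      set d₂ := e + Finsupp.single (xv p q m i) 1 + Finsupp.single (yv p q m j) 1 with hd₂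
      have hmeas : Meas p q m d₂ < Meas p q m d := by
        rw [he, hd₂, meas_add, meas_add, meas_add, meas_add,
          meas_single_x hj 1, meas_single_y hi 1, meas_single_x hi 1, meas_single_y hj 1]
        have h1 : (m - i) * 1 = m - i := by ring
        omega
      obtain ⟨d', hstd', hX, hZ, hY, hmem⟩ := ih d₂ (by omega)
      refine ⟨d', hstd', ?_, ?_, ?_, ?_⟩
      · rw [hX, hd₂, he]
        simp only [Finsupp.add_apply, Finset.sum_add_distrib]
        rw [sumX_single_x (by omega : i ≤ m + q) 1, sumX_single_x (by omega : j ≤ m + q) 1,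
          sumX_single_y, sumX_single_y]
      · rw [hZ, hd₂, he]
        simp only [Finsupp.add_apply, Finset.sum_add_distrib]
        rw [sumZ_single_x, sumZ_single_x, sumZ_single_y, sumZ_single_y]
      · rw [hY, hd₂, he]
        simp only [Finsupp.add_apply, Finset.sum_add_distrib]
        rw [sumY_single_x, sumY_single_x, sumY_single_y hi 1, sumY_single_y hj 1]
      · have hkey : (monomial d 1 - monomial d₂ 1
            : MvPolynomial (Fin (m + q + 1) ⊕ Fin (m + p + 1)) k) ∈ I := by
          rw [he, hd₂, monomial_decomp, monomial_decomp]
          have : (monomial e 1 : MvPolynomial (Fin (m + q + 1) ⊕ Fin (m + p + 1)) k)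
              * (X (xv p q m j) * X (yv p q m i))
              - monomial e 1 * (X (xv p q m i) * X (yv p q m j))
              = monomial e 1
                * -(X (xv p q m i) * X (yv p q m j) - X (xv p q m j) * X (yv p q m i)) := by
            ring
          rw [this]
          exact I.mul_mem_left _ (I.neg_mem (gen_mem hI hi hj))
        have := I.add_mem hkey hmem
        simpa using this
  
end Reduce

section Span

variable {k : Type*} [Field k] {p q m s t : ℕ}
  {I : Ideal (MvPolynomial (Fin (m + q + 1) ⊕ Fin (m + p + 1)) k)}

lemma bidegPiece_eq_span :
    bidegPiece k (Fin (m + q + 1)) (Fin (m + p + 1)) s t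
      = Submodule.span k ((fun d => (monomial d 1
            : MvPolynomial (Fin (m + q + 1) ⊕ Fin (m + p + 1)) k)) ''
          {d | (∑ i : Fin (m + q + 1), d (Sum.inl i)) = s
            ∧ (∑ j : Fin (m + p + 1), d (Sum.inr j)) = t}) := by
  apply le_antisymm
  · rw [bidegPiece, Submodule.span_le]
    intro P hP
    rw [← support_sum_monomial_coeff P]
    apply Submodule.sum_mem
    intro v hv
    have : (monomial v (coeff v P) : MvPolynomial (Fin (m + q + 1) ⊕ Fin (m + p + 1)) k)
        = (coeff v P) • monomial v 1 := by
      rw [smul_monomial, smul_eq_mul, mul_one]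
    rw [this]
    exact Submodule.smul_mem _ _ (Submodule.subset_span ⟨v, hP v hv, rfl⟩)
  · rw [Submodule.span_le]
    rintro x ⟨d, hd, rfl⟩
    apply Submodule.subset_span
    intro e he
    classical
    rw [support_monomial, if_neg (one_ne_zero)] at he
    rw [Finset.mem_singleton] at he
    subst he
    exact hd

lemma image_eq (hI : I = Ideal.span {f | ∃ i j : Fin (m + 1),
      f = X (Sum.inl ⟨(i : ℕ), by have := Nat.succ_le_of_lt i.isLt; omega⟩)
            * X (Sum.inr ⟨p + (j : ℕ), by have := Nat.succ_le_of_lt j.isLt; omega⟩)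
          - X (Sum.inl ⟨(j : ℕ), by have := Nat.succ_le_of_lt j.isLt; omega⟩)
            * X (Sum.inr ⟨p + (i : ℕ), by have := Nat.succ_le_of_lt i.isLt; omega⟩)}) :
    (bidegPiece k (Fin (m + q + 1)) (Fin (m + p + 1)) s t).map
        (Ideal.Quotient.mkₐ k I).toLinearMap
      = Submodule.span k ((fun d => Ideal.Quotient.mk I ((monomial d 1))) ''
          {d | Std p q m d ∧ (∑ i : Fin (m + q + 1), d (Sum.inl i)) = s
            ∧ (∑ j : Fin (m + p + 1), d (Sum.inr j)) = t}) := by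
  rw [bidegPiece_eq_span, Submodule.map_span, Set.image_image]
  have hmk : ∀ x : MvPolynomial (Fin (m + q + 1) ⊕ Fin (m + p + 1)) k,
      (Ideal.Quotient.mkₐ k I).toLinearMap x = Ideal.Quotient.mk I x := fun x => rfl
  apply le_antisymm
  · rw [Submodule.span_le]
    rintro x ⟨d, hd, rfl⟩
    obtain ⟨d', hstd, hX, hZ, hY, hmem⟩ := reduce hI (Meas p q m d) d le_rfl
    have heq : Ideal.Quotient.mk I ((monomial d 1)
        : MvPolynomial (Fin (m + q + 1) ⊕ Fin (m + p + 1)) k)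
        = Ideal.Quotient.mk I (monomial d' 1) := by
      rw [Ideal.Quotient.eq]
      exact hmem
    show (Ideal.Quotient.mkₐ k I).toLinearMap ((monomial d) 1) ∈ _
    rw [hmk, heq]
    apply Submodule.subset_span
    refine ⟨d', ⟨hstd, ?_, ?_⟩, rfl⟩
    · rw [degX_range (p := p) (q := q) (m := m) d', hX,
        ← degX_range (p := p) (q := q) (m := m) d]
      exact hd.1
    · rw [degY_range (p := p) (q := q) (m := m) d', hZ, hY,
        ← degY_range (p := p) (q := q) (m := m) d]
      exact hd.2
  · rw [Submodule.span_le]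
    rintro x ⟨d, ⟨hstd, h1, h2⟩, rfl⟩
    exact Submodule.subset_span ⟨d, ⟨h1, h2⟩, (hmk _).symm⟩

end Span
section Indep

/-- The collapse map sending `y_{p+i}` to `x_i` for `0 ≤ i ≤ m`. -/
def psi (p q m : ℕ) : (Fin (m + q + 1) ⊕ Fin (m + p + 1)) → (Fin (m + q + 1) ⊕ Fin (m + p + 1))
  | Sum.inl i => Sum.inl i
  | Sum.inr b => if _ : (b : ℕ) < p then Sum.inr b
      else Sum.inl ⟨(b : ℕ) - p, by have := b.isLt; omega⟩

variable {p q m : ℕ}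

lemma psi_inl (i : Fin (m + q + 1)) : psi p q m (Sum.inl i) = Sum.inl i := rfl

lemma psi_inr_low {b : Fin (m + p + 1)} (h : (b : ℕ) < p) :
    psi p q m (Sum.inr b) = Sum.inr b := by simp [psi, h]

lemma psi_inr_high {b : Fin (m + p + 1)} (h : p ≤ (b : ℕ)) :
    psi p q m (Sum.inr b) = Sum.inl ⟨(b : ℕ) - p, by have := b.isLt; omega⟩ := by
  simp [psi, Nat.not_lt.2 h]

lemma mapDomain_eval (f : (Fin (m + q + 1) ⊕ Fin (m + p + 1)) → (Fin (m + q + 1) ⊕ Fin (m + p + 1)))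
    (d : Fin (m + q + 1) ⊕ Fin (m + p + 1) →₀ ℕ) (c : Fin (m + q + 1) ⊕ Fin (m + p + 1)) :
    Finsupp.mapDomain f d c = ∑ v : Fin (m + q + 1) ⊕ Fin (m + p + 1),
      if f v = c then d v else 0 := by
  classical
  rw [Finsupp.mapDomain, Finsupp.sum_apply,
    Finsupp.sum_fintype _ _ (fun a => by simp)]
  apply Finset.sum_congr rfl
  intro v _
  rw [Finsupp.single_apply]

lemma eval_high (d : Fin (m + q + 1) ⊕ Fin (m + p + 1) →₀ ℕ) {i : Fin (m + q + 1)}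
    (hi : m < (i : ℕ)) :
    Finsupp.mapDomain (psi p q m) d (Sum.inl i) = d (Sum.inl i) := by
  classical
  rw [mapDomain_eval, Fintype.sum_sum_type]
  have h1 : ∀ a : Fin (m + q + 1),
      (if psi p q m (Sum.inl a) = Sum.inl i then d (Sum.inl a) else 0)
        = if a = i then d (Sum.inl a) else 0 := by
    intro a
    rw [psi_inl]
    simp
  have h2 : ∀ b : Fin (m + p + 1),
      (if psi p q m (Sum.inr b) = Sum.inl i then d (Sum.inr b) else 0) = 0 := by
    intro b
    rw [if_neg]
    intro hc
    by_cases hb : (b : ℕ) < p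
    · rw [psi_inr_low hb] at hc
      exact nomatch hc
    · rw [psi_inr_high (by omega)] at hc
      have := congrArg Fin.val (Sum.inl.inj hc)
      simp at this
      have := b.isLt
      omega
  simp_rw [h1, h2]
  rw [Finset.sum_ite_eq' Finset.univ i (fun a => d (Sum.inl a)), if_pos (Finset.mem_univ i),
    Finset.sum_const_zero, add_zero]

lemma eval_low (d : Fin (m + q + 1) ⊕ Fin (m + p + 1) →₀ ℕ) {b : Fin (m + p + 1)}
    (hb : (b : ℕ) < p) :
    Finsupp.mapDomain (psi p q m) d (Sum.inr b) = d (Sum.inr b) := by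
  classical
  rw [mapDomain_eval, Fintype.sum_sum_type]
  have h1 : ∀ a : Fin (m + q + 1),
      (if psi p q m (Sum.inl a) = Sum.inr b then d (Sum.inl a) else 0) = 0 := by
    intro a
    rw [psi_inl, if_neg (fun hc => nomatch hc)]
  have h2 : ∀ b' : Fin (m + p + 1),
      (if psi p q m (Sum.inr b') = Sum.inr b then d (Sum.inr b') else 0)
        = if b' = b then d (Sum.inr b') else 0 := by
    intro b'
    by_cases hb' : (b' : ℕ) < p
    · rw [psi_inr_low hb']
      simp
    · rw [psi_inr_high (by omega)]
      rw [if_neg (fun hc => nomatch hc), if_neg]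
      intro hc
      subst hc
      omega
  simp_rw [h1, h2]
  rw [Finset.sum_ite_eq' Finset.univ b (fun a => d (Sum.inr a)), if_pos (Finset.mem_univ b),
    Finset.sum_const_zero, zero_add]

lemma eval_mid (d : Fin (m + q + 1) ⊕ Fin (m + p + 1) →₀ ℕ) {i : ℕ} (hi : i ≤ m) :
    Finsupp.mapDomain (psi p q m) d (xv p q m i) = d (xv p q m i) + d (yv p q m i) := by
  classical
  rw [mapDomain_eval, Fintype.sum_sum_type, xv_eq (by omega : i ≤ m + q)]
  have h1 : ∀ a : Fin (m + q + 1),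
      (if psi p q m (Sum.inl a) = Sum.inl ⟨i, by omega⟩ then d (Sum.inl a) else 0)
        = if a = ⟨i, by omega⟩ then d (Sum.inl a) else 0 := by
    intro a
    rw [psi_inl]
    simp
  have h2 : ∀ b' : Fin (m + p + 1),
      (if psi p q m (Sum.inr b') = Sum.inl ⟨i, by omega⟩ then d (Sum.inr b') else 0)
        = if b' = ⟨p + i, by omega⟩ then d (Sum.inr b') else 0 := by
    intro b'
    by_cases hb' : (b' : ℕ) < p
    · rw [psi_inr_low hb', if_neg (fun hc => nomatch hc), if_neg]
      intro hc
      have := congrArg Fin.val hc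
      simp at this
      omega
    · rw [psi_inr_high (by omega)]
      by_cases hc : b' = ⟨p + i, by omega⟩
      · rw [if_pos, if_pos hc]
        have := congrArg Fin.val hc
        simp only [] at this
        rw [Sum.inl.injEq]
        apply Fin.ext
        simp [this]
      · rw [if_neg, if_neg hc]
        intro hcc
        have h3 := congrArg Fin.val (Sum.inl.inj hcc)
        simp at h3
        apply hc
        apply Fin.ext
        simp
        omega
  simp_rw [h1, h2]
  rw [Finset.sum_ite_eq' Finset.univ (⟨i, by omega⟩ : Fin (m + q + 1)) (fun a => d (Sum.inl a)),
    if_pos (Finset.mem_univ _),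
    Finset.sum_ite_eq' Finset.univ (⟨p + i, by omega⟩ : Fin (m + p + 1)) (fun a => d (Sum.inr a)),
    if_pos (Finset.mem_univ _), yv_eq hi]

end Indep
section Formula

variable {p q m : ℕ}

/-- The x-exponents of a standard monomial are determined by the combined exponents
`w` and the total x-degree on the coupled block. -/
lemma std_formula {d : Fin (m + q + 1) ⊕ Fin (m + p + 1) →₀ ℕ} (hstd : Std p q m d)
    {i : ℕ} (hi : i ≤ m) :
    d (xv p q m i) = min (d (xv p q m i) + d (yv p q m i))
      ((∑ r ∈ range (m + 1), d (xv p q m r))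
        - ∑ r ∈ range i, (d (xv p q m r) + d (yv p q m r))) := by
  have hle : (∑ r ∈ range (i + 1), d (xv p q m r)) ≤ ∑ r ∈ range (m + 1), d (xv p q m r) :=
    Finset.sum_le_sum_of_subset (Finset.range_subset_range.2 (by omega))
  have hsplit : (∑ r ∈ range (i + 1), d (xv p q m r))
      = (∑ r ∈ range i, d (xv p q m r)) + d (xv p q m i) := Finset.sum_range_succ _ i
  have hmono : (∑ r ∈ range i, d (xv p q m r))
      ≤ ∑ r ∈ range i, (d (xv p q m r) + d (yv p q m r)) :=
    Finset.sum_le_sum (fun r _ => by omega)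
  by_cases hA : ∃ j, i < j ∧ j ≤ m ∧ d (xv p q m j) ≠ 0
  · obtain ⟨j, hij, hjm, hj⟩ := hA
    have hb : d (yv p q m i) = 0 := (hstd i j hij hjm).resolve_left hj
    have hzero : ∀ r ∈ range i, d (xv p q m r) + d (yv p q m r) = d (xv p q m r) := by
      intro r hr
      simp only [mem_range] at hr
      have : d (yv p q m r) = 0 := (hstd r j (by omega) hjm).resolve_left hj
      omega
    rw [Finset.sum_congr rfl hzero]
    omega
  · push_neg at hA
    have hsum : (∑ r ∈ range (m + 1), d (xv p q m r)) = ∑ r ∈ range (i + 1), d (xv p q m r) := by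
      rw [← Finset.sum_range_add_sum_Ico _ (show i + 1 ≤ m + 1 by omega)]
      have : ∀ r ∈ Finset.Ico (i + 1) (m + 1), d (xv p q m r) = 0 := by
        intro r hr
        simp only [Finset.mem_Ico] at hr
        exact hA r (by omega) (by omega)
      rw [Finset.sum_congr rfl this, Finset.sum_const_zero, add_zero]
    by_cases hz : d (xv p q m i) = 0
    · rw [hz]
      have : (∑ r ∈ range (m + 1), d (xv p q m r))
          ≤ ∑ r ∈ range i, (d (xv p q m r) + d (yv p q m r)) := by
        rw [hsum, hsplit, hz]
        omega
      omega
    · have hzero : ∀ r ∈ range i, d (xv p q m r) + d (yv p q m r) = d (xv p q m r) := by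
        intro r hr
        simp only [mem_range] at hr
        have : d (yv p q m r) = 0 := (hstd r i (by omega) hi).resolve_left hz
        omega
      rw [Finset.sum_congr rfl hzero, hsum]
      omega

/-- Injectivity of the collapse map on standard exponents of fixed x-degree. -/
lemma map_inj {d₁ d₂ : Fin (m + q + 1) ⊕ Fin (m + p + 1) →₀ ℕ}
    (h1 : Std p q m d₁) (h2 : Std p q m d₂)
    (hdeg : (∑ i : Fin (m + q + 1), d₁ (Sum.inl i)) = ∑ i : Fin (m + q + 1), d₂ (Sum.inl i))
    (h : Finsupp.mapDomain (psi p q m) d₁ = Finsupp.mapDomain (psi p q m) d₂) :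
    d₁ = d₂ := by
  have hw : ∀ i : ℕ, i ≤ m →
      d₁ (xv p q m i) + d₁ (yv p q m i) = d₂ (xv p q m i) + d₂ (yv p q m i) := by
    intro i hi
    rw [← eval_mid d₁ hi, ← eval_mid d₂ hi, h]
  have hhigh : ∀ i : Fin (m + q + 1), m < (i : ℕ) → d₁ (Sum.inl i) = d₂ (Sum.inl i) := by
    intro i hi
    rw [← eval_high d₁ hi, ← eval_high d₂ hi, h]
  have hlow : ∀ b : Fin (m + p + 1), (b : ℕ) < p → d₁ (Sum.inr b) = d₂ (Sum.inr b) := by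
    intro b hb
    rw [← eval_low d₁ hb, ← eval_low d₂ hb, h]
  have hs' : (∑ r ∈ range (m + 1), d₁ (xv p q m r)) = ∑ r ∈ range (m + 1), d₂ (xv p q m r) := by
    have e1 := degX_range (p := p) (q := q) (m := m) d₁
    have e2 := degX_range (p := p) (q := q) (m := m) d₂
    rw [e1, e2] at hdeg
    rw [← Finset.sum_range_add_sum_Ico _ (show m + 1 ≤ m + q + 1 by omega),
      ← Finset.sum_range_add_sum_Ico _ (show m + 1 ≤ m + q + 1 by omega)] at hdeg
    have : ∀ r ∈ Finset.Ico (m + 1) (m + q + 1), d₁ (xv p q m r) = d₂ (xv p q m r) := by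
      intro r hr
      simp only [Finset.mem_Ico] at hr
      rw [xv_eq (by omega : r ≤ m + q)]
      exact hhigh ⟨r, by omega⟩ (by simp; omega)
    rw [Finset.sum_congr rfl this] at hdeg
    omega
  have hx : ∀ i : ℕ, i ≤ m → d₁ (xv p q m i) = d₂ (xv p q m i) := by
    intro i hi
    rw [std_formula h1 hi, std_formula h2 hi, hs', hw i hi,
      Finset.sum_congr rfl (fun r hr => hw r (by simp at hr; omega))]
  ext v
  rcases v with i | b
  · by_cases hi : m < (i : ℕ)
    · exact hhigh i hi
    · have hi' : (i : ℕ) ≤ m := by omega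
      have hxe : Sum.inl i = xv p q m (i : ℕ) := by
        rw [xv_eq (by omega : (i : ℕ) ≤ m + q)]
      rw [hxe]
      exact hx i hi'
  · by_cases hb : (b : ℕ) < p
    · exact hlow b hb
    · have hb' : p ≤ (b : ℕ) := by omega
      have hbm : (b : ℕ) - p ≤ m := by have := b.isLt; omega
      have hye : Sum.inr b = yv p q m ((b : ℕ) - p) := by
        rw [yv_eq hbm]
        congr 1
        apply Fin.ext
        simp
        omega
      rw [hye]
      have := hw _ hbm
      have := hx _ hbm
      omega

end Formula
section Rank

variable (p q m s t : ℕ)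

def BSet : Set (Fin (m + q + 1) ⊕ Fin (m + p + 1) →₀ ℕ) :=
  {d | (∑ i : Fin (m + q + 1), d (Sum.inl i)) = s ∧ (∑ j : Fin (m + p + 1), d (Sum.inr j)) = t}

def StdSet : Set (Fin (m + q + 1) ⊕ Fin (m + p + 1) →₀ ℕ) :=
  {d | Std p q m d ∧ (∑ i : Fin (m + q + 1), d (Sum.inl i)) = s
    ∧ (∑ j : Fin (m + p + 1), d (Sum.inr j)) = t}

variable {p q m s t}

lemma bset_bound {d : Fin (m + q + 1) ⊕ Fin (m + p + 1) →₀ ℕ} (hd : d ∈ BSet p q m s t)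
    (v : Fin (m + q + 1) ⊕ Fin (m + p + 1)) : d v < s + t + 1 := by
  rcases v with i | b
  · have : d (Sum.inl i) ≤ ∑ i : Fin (m + q + 1), d (Sum.inl i) :=
      Finset.single_le_sum (f := fun i => d (Sum.inl i)) (fun i _ => Nat.zero_le _)
        (Finset.mem_univ i)
    rw [hd.1] at this
    omega
  · have : d (Sum.inr b) ≤ ∑ j : Fin (m + p + 1), d (Sum.inr j) :=
      Finset.single_le_sum (f := fun j => d (Sum.inr j)) (fun i _ => Nat.zero_le _)
        (Finset.mem_univ b)
    rw [hd.2] at this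
    omega

noncomputable instance : Fintype (BSet p q m s t) :=
  Fintype.ofInjective
    (fun d => (fun v => (⟨d.1 v, bset_bound d.2 v⟩
        : Fin (s + t + 1)) : Fin (m + q + 1) ⊕ Fin (m + p + 1) → Fin (s + t + 1)))
    (by
      intro d₁ d₂ hd
      apply Subtype.ext
      ext v
      exact congrArg Fin.val (congrFun hd v))

noncomputable instance : Fintype (StdSet p q m s t) :=
  Fintype.ofInjective
    (fun d => (⟨d.1, d.2.2⟩ : BSet p q m s t))
    (by
      intro d₁ d₂ hd
      exact Subtype.ext (congrArg (fun x : BSet p q m s t => x.1) hd))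

variable {k : Type*} [Field k]
  {I : Ideal (MvPolynomial (Fin (m + q + 1) ⊕ Fin (m + p + 1)) k)}

lemma rename_psi_ker (hI : I = Ideal.span {f | ∃ i j : Fin (m + 1),
      f = X (Sum.inl ⟨(i : ℕ), by have := Nat.succ_le_of_lt i.isLt; omega⟩)
            * X (Sum.inr ⟨p + (j : ℕ), by have := Nat.succ_le_of_lt j.isLt; omega⟩)
          - X (Sum.inl ⟨(j : ℕ), by have := Nat.succ_le_of_lt j.isLt; omega⟩)
            * X (Sum.inr ⟨p + (i : ℕ), by have := Nat.succ_le_of_lt i.isLt; omega⟩)}) :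
    ∀ a ∈ I, (rename (psi p q m) : MvPolynomial (Fin (m + q + 1) ⊕ Fin (m + p + 1)) k →ₐ[k]
      MvPolynomial (Fin (m + q + 1) ⊕ Fin (m + p + 1)) k) a = 0 := by
  intro a ha
  have hle : I ≤ RingHom.ker (rename (psi p q m)
      : MvPolynomial (Fin (m + q + 1) ⊕ Fin (m + p + 1)) k →ₐ[k]
        MvPolynomial (Fin (m + q + 1) ⊕ Fin (m + p + 1)) k).toRingHom := by
    rw [hI, Ideal.span_le]
    rintro f ⟨i, j, rfl⟩
    have hpsiy : ∀ a : Fin (m + 1), psi p q m (Sum.inr ⟨p + (a : ℕ), by have := Nat.succ_le_of_lt a.isLt; omega⟩)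
        = Sum.inl ⟨(a : ℕ), by have := Nat.succ_le_of_lt a.isLt; omega⟩ := by
      intro a
      rw [psi_inr_high (by simp)]
      rw [Sum.inl.injEq]
      apply Fin.ext
      simp
    simp only [SetLike.mem_coe, RingHom.mem_ker, AlgHom.toRingHom_eq_coe, RingHom.coe_coe,
      map_sub, map_mul, rename_X, psi_inl, hpsiy]
    ring
  exact hle ha

lemma lin_indep (hI : I = Ideal.span {f | ∃ i j : Fin (m + 1),
      f = X (Sum.inl ⟨(i : ℕ), by have := Nat.succ_le_of_lt i.isLt; omega⟩)
            * X (Sum.inr ⟨p + (j : ℕ), by have := Nat.succ_le_of_lt j.isLt; omega⟩)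
          - X (Sum.inl ⟨(j : ℕ), by have := Nat.succ_le_of_lt j.isLt; omega⟩)
            * X (Sum.inr ⟨p + (i : ℕ), by have := Nat.succ_le_of_lt i.isLt; omega⟩)}) :
    LinearIndependent k (fun d : StdSet p q m s t =>
      Ideal.Quotient.mk I (monomial d.1 1)) := by
  classical
  set φbar := Ideal.Quotient.liftₐ I
    (rename (psi p q m) : MvPolynomial (Fin (m + q + 1) ⊕ Fin (m + p + 1)) k →ₐ[k]
      MvPolynomial (Fin (m + q + 1) ⊕ Fin (m + p + 1)) k) (rename_psi_ker hI) with hφbar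
  apply LinearIndependent.of_comp φbar.toLinearMap
  have hcomp : (φbar.toLinearMap ∘ fun d : StdSet p q m s t =>
      Ideal.Quotient.mk I (monomial d.1 1))
      = fun d : StdSet p q m s t =>
        (basisMonomials (Fin (m + q + 1) ⊕ Fin (m + p + 1)) k)
          (Finsupp.mapDomain (psi p q m) d.1) := by
    funext d
    show φbar (Ideal.Quotient.mk I (monomial d.1 1)) = _
    rw [hφbar, Ideal.Quotient.liftₐ_apply]
    erw [Ideal.Quotient.lift_mk]
    rw [AlgHom.coe_toRingHom,
      rename_monomial]
    rw [coe_basisMonomials]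
  rw [hcomp]
  apply (basisMonomials (Fin (m + q + 1) ⊕ Fin (m + p + 1)) k).linearIndependent.comp
  intro d₁ d₂ hd
  apply Subtype.ext
  exact map_inj d₁.2.1 d₂.2.1 (d₁.2.2.1.trans d₂.2.2.1.symm) hd

lemma finrank_eq_card (hI : I = Ideal.span {f | ∃ i j : Fin (m + 1),
      f = X (Sum.inl ⟨(i : ℕ), by have := Nat.succ_le_of_lt i.isLt; omega⟩)
            * X (Sum.inr ⟨p + (j : ℕ), by have := Nat.succ_le_of_lt j.isLt; omega⟩)
          - X (Sum.inl ⟨(j : ℕ), by have := Nat.succ_le_of_lt j.isLt; omega⟩)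
            * X (Sum.inr ⟨p + (i : ℕ), by have := Nat.succ_le_of_lt i.isLt; omega⟩)}) :
    Module.finrank k ((bidegPiece k (Fin (m + q + 1)) (Fin (m + p + 1)) s t).map
        (Ideal.Quotient.mkₐ k I).toLinearMap)
      = Fintype.card (StdSet p q m s t) := by
  rw [image_eq hI]
  have himg : ((fun d => Ideal.Quotient.mk I ((monomial d 1))) ''
        {d | Std p q m d ∧ (∑ i : Fin (m + q + 1), d (Sum.inl i)) = s
          ∧ (∑ j : Fin (m + p + 1), d (Sum.inr j)) = t})
      = Set.range (fun d : StdSet p q m s t => Ideal.Quotient.mk I (monomial d.1 1)) := by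
    rw [Set.image_eq_range]
    rfl
  rw [himg]
  exact finrank_span_eq_card (lin_indep hI)

end Rank
section Count

lemma countA (V : Type*) [Fintype V] [DecidableEq V] (s : ℕ) :
    Nat.card {f : V →₀ ℕ // (∑ v, f v) = s} = (Fintype.card V + s - 1).choose s := by
  have e : Sym V s ≃ {f : V →₀ ℕ // (∑ v, f v) = s} := by
    refine Equiv.subtypeEquiv Multiset.toFinsupp.toEquiv (fun mm => ?_)
    have h1 : ∀ v : V, (Multiset.toFinsupp.toEquiv mm) v = mm.count v := fun v =>
      Multiset.toFinsupp_apply mm v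
    simp_rw [h1]
    rw [Multiset.sum_count_eq_card (fun a _ => mem_univ a)]
  rw [← Nat.card_congr e, Nat.card_eq_fintype_card, Sym.card_sym_eq_choose]

lemma countB (V : Type*) [Fintype V] [DecidableEq V] (W : Finset V) (s : ℕ) :
    Nat.card {f : V →₀ ℕ // (∑ v, f v) = s ∧ ∀ v ∉ W, f v = 0}
      = (W.card + s - 1).choose s := by
  classical
  have e : {f : V →₀ ℕ // (∑ v, f v) = s ∧ ∀ v ∉ W, f v = 0}
      ≃ {g : {x // x ∈ W} →₀ ℕ // (∑ w, g w) = s} := by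
    refine ⟨fun f => ⟨Finsupp.subtypeDomain (· ∈ W) f.1, ?_⟩,
      fun g => ⟨Finsupp.extendDomain g.1, ?_, ?_⟩, fun f => ?_, fun g => ?_⟩
    · obtain ⟨f, hs, hz⟩ := f
      dsimp only
      rw [← hs]
      rw [← Finset.sum_subset (Finset.subset_univ W) (fun x _ hx => hz x hx)]
      rw [← Finset.sum_attach W (fun x => f x)]
      rfl
    · obtain ⟨g, hs⟩ := g
      dsimp only
      rw [← hs,
        ← Finset.sum_subset (Finset.subset_univ W)
          (fun x _ hx => by simp [Finsupp.extendDomain_apply, hx]),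
        ← Finset.sum_attach W fun x => Finsupp.extendDomain g x, Finset.univ_eq_attach]
      apply Finset.sum_congr rfl
      intro x _
      simp [Finsupp.extendDomain_apply, x.2]
    · intro v hv
      simp [Finsupp.extendDomain_apply, hv]
    · obtain ⟨f, hs, hz⟩ := f
      apply Subtype.ext
      exact Finsupp.extendDomain_subtypeDomain f
        (fun a ha => by_contra fun h => (Finsupp.mem_support_iff.1 ha) (hz a h))
    · exact Subtype.ext (Finsupp.subtypeDomain_extendDomain g.1)
  rw [Nat.card_congr e, countA, Fintype.card_coe]

lemma countC (α β : Type*) [Fintype α] [Fintype β] [DecidableEq α] [DecidableEq β]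
    (Wa : Finset α) (Wb : Finset β) (s t : ℕ) :
    Nat.card {d : α ⊕ β →₀ ℕ //
        ((∑ i, d (Sum.inl i)) = s ∧ (∑ j, d (Sum.inr j)) = t)
        ∧ (∀ i ∉ Wa, d (Sum.inl i) = 0) ∧ (∀ j ∉ Wb, d (Sum.inr j) = 0)}
      = (Wa.card + s - 1).choose s * ((Wb.card + t - 1).choose t) := by
  classical
  have e : {d : α ⊕ β →₀ ℕ //
        ((∑ i, d (Sum.inl i)) = s ∧ (∑ j, d (Sum.inr j)) = t)
        ∧ (∀ i ∉ Wa, d (Sum.inl i) = 0) ∧ (∀ j ∉ Wb, d (Sum.inr j) = 0)}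
      ≃ {f : α →₀ ℕ // (∑ v, f v) = s ∧ ∀ v ∉ Wa, f v = 0}
        × {g : β →₀ ℕ // (∑ v, g v) = t ∧ ∀ v ∉ Wb, g v = 0} := by
    refine ⟨fun d => (⟨(Finsupp.sumFinsuppEquivProdFinsupp d.1).1, ?_, ?_⟩,
        ⟨(Finsupp.sumFinsuppEquivProdFinsupp d.1).2, ?_, ?_⟩),
      fun fg => ⟨Finsupp.sumFinsuppEquivProdFinsupp.symm (fg.1.1, fg.2.1), ⟨?_, ?_⟩, ?_, ?_⟩,
      fun d => ?_, fun fg => ?_⟩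
    · simpa only [Finsupp.fst_sumFinsuppEquivProdFinsupp] using d.2.1.1
    · intro v hv
      simpa only [Finsupp.fst_sumFinsuppEquivProdFinsupp] using d.2.2.1 v hv
    · simpa only [Finsupp.snd_sumFinsuppEquivProdFinsupp] using d.2.1.2
    · intro v hv
      simpa only [Finsupp.snd_sumFinsuppEquivProdFinsupp] using d.2.2.2 v hv
    · simpa only [Finsupp.sumFinsuppEquivProdFinsupp_symm_inl] using fg.1.2.1
    · simpa only [Finsupp.sumFinsuppEquivProdFinsupp_symm_inr] using fg.2.2.1
    · intro i hi
      simpa only [Finsupp.sumFinsuppEquivProdFinsupp_symm_inl] using fg.1.2.2 i hi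
    · intro j hj
      simpa only [Finsupp.sumFinsuppEquivProdFinsupp_symm_inr] using fg.2.2.2 j hj
    · apply Subtype.ext
      exact Finsupp.sumFinsuppEquivProdFinsupp.symm_apply_apply d.1
    · ext : 1 <;> apply Subtype.ext
      · exact congrArg Prod.fst
          (Finsupp.sumFinsuppEquivProdFinsupp.apply_symm_apply (fg.1.1, fg.2.1))
      · exact congrArg Prod.snd
          (Finsupp.sumFinsuppEquivProdFinsupp.apply_symm_apply (fg.1.1, fg.2.1))
  rw [Nat.card_congr e, Nat.card_prod, countB, countB]


lemma fin_filter_card (n : ℕ) (P : ℕ → Prop) [DecidablePred P] :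
    (univ.filter fun i : Fin n => P i.1).card = ((range n).filter P).card := by
  rw [Finset.card_filter, Finset.card_filter]
  exact Fin.sum_univ_eq_sum_range (fun i => if P i then 1 else 0) n

lemma cardWX (q m ℓ : ℕ) (hℓ : ℓ ≤ m) :
    (univ.filter fun i : Fin (m + q + 1) => i.1 ≤ ℓ ∨ m < i.1).card = q + ℓ + 1 := by
  rw [fin_filter_card (m+q+1) (fun i => i ≤ ℓ ∨ m < i)]
  have : (range (m + q + 1)).filter (fun i => i ≤ ℓ ∨ m < i)
      = range (ℓ + 1) ∪ Ico (m + 1) (m + q + 1) := by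
    ext i
    simp only [mem_filter, mem_range, mem_union, mem_Ico]
    omega
  rw [this, Finset.card_union_of_disjoint, card_range, Nat.card_Ico]
  · omega
  · rw [Finset.disjoint_left]
    intro a ha hb
    simp only [mem_range] at ha
    simp only [mem_Ico] at hb
    omega

lemma cardWY (p m ℓ : ℕ) (hℓ : ℓ ≤ m + 1) :
    (univ.filter fun j : Fin (m + p + 1) => j.1 < p ∨ p + ℓ ≤ j.1).card
      = p + (m + 1 - ℓ) := by
  rw [fin_filter_card (m+p+1) (fun j => j < p ∨ p + ℓ ≤ j)]
  have : (range (m + p + 1)).filter (fun j => j < p ∨ p + ℓ ≤ j)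
      = range p ∪ Ico (p + ℓ) (m + p + 1) := by
    ext i
    simp only [mem_filter, mem_range, mem_union, mem_Ico]
    omega
  rw [this, Finset.card_union_of_disjoint, card_range, Nat.card_Ico]
  · omega
  · rw [Finset.disjoint_left]
    intro a ha hb
    simp only [mem_range] at ha
    simp only [mem_Ico] at hb
    omega

end Count
section Conds

def condX (p q m ℓ : ℕ) (d : Fin (m + q + 1) ⊕ Fin (m + p + 1) →₀ ℕ) : Prop :=
  ∀ j : ℕ, ℓ < j → j ≤ m → d (xv p q m j) = 0

def condY (p q m ℓ : ℕ) (d : Fin (m + q + 1) ⊕ Fin (m + p + 1) →₀ ℕ) : Prop :=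
  ∀ i : ℕ, i < ℓ → i ≤ m → d (yv p q m i) = 0

variable {p q m : ℕ}

lemma condX_mono {ℓ ℓ' : ℕ} (h : ℓ ≤ ℓ') {d : Fin (m + q + 1) ⊕ Fin (m + p + 1) →₀ ℕ}
    (hd : condX p q m ℓ d) : condX p q m ℓ' d :=
  fun j hj hjm => hd j (by omega) hjm

lemma condY_anti {ℓ ℓ' : ℕ} (h : ℓ' ≤ ℓ) {d : Fin (m + q + 1) ⊕ Fin (m + p + 1) →₀ ℕ}
    (hd : condY p q m ℓ d) : condY p q m ℓ' d :=
  fun i hi him => hd i (by omega) him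

lemma cond_imp_std {ℓ : ℕ} {d : Fin (m + q + 1) ⊕ Fin (m + p + 1) →₀ ℕ}
    (hX : condX p q m ℓ d) (hY : condY p q m ℓ d) : Std p q m d := by
  intro i j hij hjm
  by_cases hj : j ≤ ℓ
  · exact Or.inr (hY i (by omega) (by omega))
  · exact Or.inl (hX j (by omega) hjm)

lemma std_imp_cond {d : Fin (m + q + 1) ⊕ Fin (m + p + 1) →₀ ℕ} (hstd : Std p q m d) :
    ∃ ℓ ≤ m, condX p q m ℓ d ∧ condY p q m ℓ d := by
  classical
  have hex : ∃ ℓ, condX p q m ℓ d := ⟨m, fun j hj hjm => by omega⟩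
  set ℓ0 := Nat.find hex with hℓ0
  have hc : condX p q m ℓ0 d := Nat.find_spec hex
  have hle : ℓ0 ≤ m := Nat.find_min' hex (fun j hj hjm => by omega)
  refine ⟨ℓ0, hle, hc, ?_⟩
  intro i hi him
  have hmin : ¬ condX p q m (ℓ0 - 1) d := Nat.find_min hex (by omega)
  rw [condX] at hmin
  push_neg at hmin
  obtain ⟨j, hj1, hj2, hj3⟩ := hmin
  exact (hstd i j (by omega) hj2).resolve_left hj3

end Conds

section MainCount

variable {p q m s t : ℕ}

lemma flat_card (P : (Fin (m + q + 1) ⊕ Fin (m + p + 1) →₀ ℕ) → Prop)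
    [DecidablePred fun x : BSet p q m s t => P x.1] :
    (Finset.univ.filter fun x : BSet p q m s t => P x.1).card
      = Nat.card {d : Fin (m + q + 1) ⊕ Fin (m + p + 1) →₀ ℕ // d ∈ BSet p q m s t ∧ P d} := by
  rw [← Fintype.card_subtype]
  rw [Nat.card_eq_fintype_card.symm]
  apply Nat.card_congr
  exact ⟨fun x => ⟨x.1.1, ⟨x.1.2, x.2⟩⟩, fun d => ⟨⟨d.1, d.2.1⟩, d.2.2⟩,
    fun x => rfl, fun d => rfl⟩

/-- Counting the monomials satisfying a given pair of support conditions. -/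
lemma cardS {ℓx ℓy : ℕ} (hx : ℓx ≤ m) (hy : ℓy ≤ m + 1) :
    Nat.card {d : Fin (m + q + 1) ⊕ Fin (m + p + 1) →₀ ℕ //
        d ∈ BSet p q m s t ∧ condX p q m ℓx d ∧ condY p q m ℓy d}
      = (q + ℓx + 1 + s - 1).choose s * (p + (m + 1 - ℓy) + t - 1).choose t := by
  classical
  have hiff : ∀ d : Fin (m + q + 1) ⊕ Fin (m + p + 1) →₀ ℕ,
      (d ∈ BSet p q m s t ∧ condX p q m ℓx d ∧ condY p q m ℓy d)
      ↔ (((∑ i, d (Sum.inl i)) = s ∧ (∑ j, d (Sum.inr j)) = t)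
        ∧ (∀ i ∉ (univ.filter fun i : Fin (m + q + 1) => i.1 ≤ ℓx ∨ m < i.1), d (Sum.inl i) = 0)
        ∧ (∀ j ∉ (univ.filter fun j : Fin (m + p + 1) => j.1 < p ∨ p + ℓy ≤ j.1),
            d (Sum.inr j) = 0)) := by
    intro d
    constructor
    · rintro ⟨hB, hX, hY⟩
      refine ⟨⟨hB.1, hB.2⟩, ?_, ?_⟩
      · intro i hi
        simp only [mem_filter, mem_univ, true_and] at hi
        push_neg at hi
        have : Sum.inl i = xv p q m i.1 := by rw [xv_eq (by omega : i.1 ≤ m + q)]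
        rw [this]
        exact hX i.1 (by omega) (by omega)
      · intro j hj
        simp only [mem_filter, mem_univ, true_and] at hj
        push_neg at hj
        have hjm : (j : ℕ) - p ≤ m := by have := Nat.succ_le_of_lt j.isLt; omega
        have : Sum.inr j = yv p q m ((j : ℕ) - p) := by
          rw [yv_eq hjm]
          congr 1
          apply Fin.ext
          simp
          omega
        rw [this]
        exact hY _ (by omega) hjm
    · rintro ⟨hB, hX, hY⟩
      refine ⟨⟨hB.1, hB.2⟩, ?_, ?_⟩
      · intro j hj hjm
        rw [xv_eq (by omega : j ≤ m + q)]
        exact hX ⟨j, by omega⟩ (by simp; omega)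
      · intro i hi him
        rw [yv_eq him]
        exact hY ⟨p + i, by omega⟩ (by simp; omega)
  rw [Nat.card_congr (Equiv.subtypeEquivRight hiff), countC, cardWX q m ℓx hx,
    cardWY p m ℓy hy]

/-- The interval structure of the threshold conditions: the double-counting identity. -/
lemma per_elem {d : Fin (m + q + 1) ⊕ Fin (m + p + 1) →₀ ℕ}
    [∀ ℓ, Decidable (condX p q m ℓ d)] [∀ ℓ, Decidable (condY p q m ℓ d)]
    [Decidable (Std p q m d)] :
    ((range (m + 1)).filter fun ℓ => condX p q m ℓ d ∧ condY p q m ℓ d).card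
      = ((range m).filter fun ℓ => (condX p q m ℓ d ∧ condY p q m ℓ d)
          ∧ (condX p q m (ℓ + 1) d ∧ condY p q m (ℓ + 1) d)).card
        + (if Std p q m d then 1 else 0) := by
  classical
  by_cases hstd : Std p q m d
  · rw [if_pos hstd]
    set T := (range (m + 1)).filter fun ℓ => condX p q m ℓ d ∧ condY p q m ℓ d with hT
    obtain ⟨ℓ0, hℓ0m, hc⟩ := std_imp_cond hstd
    have hne : T.Nonempty := ⟨ℓ0, by simp [hT, Finset.mem_filter, Finset.mem_range]; exact ⟨by omega, hc.1, hc.2⟩⟩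
    set M := T.max' hne with hM
    have hMT : M ∈ T := T.max'_mem hne
    have hMm : M ≤ m := by
      have := Finset.mem_filter.1 hMT
      simp only [Finset.mem_range] at this
      omega
    have hMc : condX p q m M d ∧ condY p q m M d := (Finset.mem_filter.1 hMT).2
    have hkey : ((range m).filter fun ℓ => (condX p q m ℓ d ∧ condY p q m ℓ d)
        ∧ (condX p q m (ℓ + 1) d ∧ condY p q m (ℓ + 1) d)) = T.erase M := by
      ext ℓ
      simp only [Finset.mem_filter, Finset.mem_range, Finset.mem_erase, hT]
      constructor
      · rintro ⟨hℓm, h1, h2⟩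
        refine ⟨?_, by omega, h1⟩
        intro hcongr
        have : ℓ + 1 ∈ T := by
          rw [hT]
          simp only [Finset.mem_filter, Finset.mem_range]
          exact ⟨by omega, h2⟩
        have := Finset.le_max' T _ this
        omega
      · rintro ⟨hne', hℓm, h1⟩
        have hℓM : ℓ ≤ M := Finset.le_max' T ℓ (by
          rw [hT]; simp only [Finset.mem_filter, Finset.mem_range]; exact ⟨hℓm, h1⟩)
        have hℓM' : ℓ < M := by omega
        refine ⟨by omega, h1, condX_mono (by omega) h1.1, condY_anti (by omega) hMc.2⟩
    rw [hkey, Finset.card_erase_of_mem hMT]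
    have : T.card ≠ 0 := Finset.card_ne_zero_of_mem hMT
    omega
  · rw [if_neg hstd]
    have h1 : ((range (m + 1)).filter fun ℓ => condX p q m ℓ d ∧ condY p q m ℓ d) = ∅ := by
      rw [Finset.filter_eq_empty_iff]
      intro ℓ _
      intro hc
      exact hstd (cond_imp_std hc.1 hc.2)
    have h2 : ((range m).filter fun ℓ => (condX p q m ℓ d ∧ condY p q m ℓ d)
        ∧ (condX p q m (ℓ + 1) d ∧ condY p q m (ℓ + 1) d)) = ∅ := by
      rw [Finset.filter_eq_empty_iff]
      intro ℓ _
      intro hc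
      exact hstd (cond_imp_std hc.1.1 hc.1.2)
    rw [h1, h2]
    simp

end MainCount
section Final

lemma chooseSymX (s q ℓ : ℕ) : (q + ℓ + 1 + s - 1).choose s = (s + q + ℓ).choose (q + ℓ) := by
  have h1 : q + ℓ + 1 + s - 1 = s + q + ℓ := by omega
  rw [h1]
  have h2 := Nat.choose_symm (show s ≤ s + q + ℓ by omega)
  have h3 : s + q + ℓ - s = q + ℓ := by omega
  rw [h3] at h2
  exact h2.symm

lemma chooseSymY (t c : ℕ) : (c + 1 + t - 1).choose t = (t + c).choose c := by
  have h1 : c + 1 + t - 1 = t + c := by omega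
  rw [h1]
  have h2 := Nat.choose_symm (show t ≤ t + c by omega)
  have h3 : t + c - t = c := by omega
  rw [h3] at h2
  exact h2.symm

lemma swap_count {α : Type*} [Fintype α] (n : ℕ) (P : ℕ → α → Prop)
    [∀ ℓ x, Decidable (P ℓ x)] :
    (∑ ℓ ∈ range n, (univ.filter fun x => P ℓ x).card)
      = ∑ x : α, ((range n).filter fun ℓ => P ℓ x).card := by
  simp_rw [Finset.card_filter]
  exact Finset.sum_comm

open scoped Classical in
lemma double_count (p q m s t : ℕ) :
    Fintype.card (StdSet p q m s t)
      + ∑ ℓ ∈ range m, Nat.card {d : Fin (m + q + 1) ⊕ Fin (m + p + 1) →₀ ℕ //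
          d ∈ BSet p q m s t ∧ condX p q m ℓ d ∧ condY p q m (ℓ + 1) d}
      = ∑ ℓ ∈ range (m + 1), Nat.card {d : Fin (m + q + 1) ⊕ Fin (m + p + 1) →₀ ℕ //
          d ∈ BSet p q m s t ∧ condX p q m ℓ d ∧ condY p q m ℓ d} := by
  have hstd : Fintype.card (StdSet p q m s t)
      = (Finset.univ.filter fun x : BSet p q m s t => Std p q m x.1).card := by
    rw [flat_card (P := Std p q m), ← Nat.card_eq_fintype_card]
    apply Nat.card_congr
    exact Equiv.subtypeEquivRight (fun d =>
      ⟨fun ⟨a, b, c⟩ => ⟨⟨b, c⟩, a⟩, fun ⟨⟨b, c⟩, a⟩ => ⟨a, b, c⟩⟩)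
  have hGcard : ∀ ℓ : ℕ, Nat.card {d : Fin (m + q + 1) ⊕ Fin (m + p + 1) →₀ ℕ //
          d ∈ BSet p q m s t ∧ condX p q m ℓ d ∧ condY p q m (ℓ + 1) d}
      = (Finset.univ.filter fun x : BSet p q m s t =>
          (condX p q m ℓ x.1 ∧ condY p q m ℓ x.1)
          ∧ (condX p q m (ℓ + 1) x.1 ∧ condY p q m (ℓ + 1) x.1)).card := by
    intro ℓ
    rw [← flat_card (P := fun d => condX p q m ℓ d ∧ condY p q m (ℓ + 1) d)]
    apply Finset.card_bij (fun x _ => x) <;> intro x hx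
    · simp only [Finset.mem_filter, Finset.mem_univ, true_and] at hx ⊢
      exact ⟨⟨hx.1, condY_anti (Nat.le_succ ℓ) hx.2⟩, ⟨condX_mono (Nat.le_succ ℓ) hx.1, hx.2⟩⟩
    · intro y _ hxy
      exact hxy
    · simp only [Finset.mem_filter, Finset.mem_univ, true_and] at hx
      refine ⟨x, ?_, rfl⟩
      simp only [Finset.mem_filter, Finset.mem_univ, true_and]
      exact ⟨hx.1.1, hx.2.2⟩
  have hFcard : ∀ ℓ : ℕ, Nat.card {d : Fin (m + q + 1) ⊕ Fin (m + p + 1) →₀ ℕ //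
          d ∈ BSet p q m s t ∧ condX p q m ℓ d ∧ condY p q m ℓ d}
      = (Finset.univ.filter fun x : BSet p q m s t =>
          condX p q m ℓ x.1 ∧ condY p q m ℓ x.1).card := by
    intro ℓ
    rw [← flat_card (P := fun d => condX p q m ℓ d ∧ condY p q m ℓ d)]
  rw [hstd, Finset.sum_congr rfl (fun ℓ _ => hGcard ℓ),
    Finset.sum_congr rfl (fun ℓ _ => hFcard ℓ),
    swap_count (m + 1) (fun ℓ (x : ↥(BSet p q m s t)) =>
      condX p q m ℓ x.1 ∧ condY p q m ℓ x.1),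
    swap_count m (fun ℓ (x : ↥(BSet p q m s t)) =>
      (condX p q m ℓ x.1 ∧ condY p q m ℓ x.1)
        ∧ (condX p q m (ℓ + 1) x.1 ∧ condY p q m (ℓ + 1) x.1))]
  rw [Finset.sum_congr rfl (fun (x : ↥(BSet p q m s t)) _ => per_elem (d := x.1)),
    Finset.sum_add_distrib]
  have hc : (Finset.univ.filter fun x : BSet p q m s t => Std p q m x.1).card
      = ∑ x : BSet p q m s t, (if Std p q m x.1 then 1 else 0) := Finset.card_filter _ _
  rw [hc]
  ring


/-- In `R = k[x_p,…,x_{m+p+q}, y_0,…,y_{m+p}]` (the x-variable `x_{p+a}` being indexed by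
`a : Fin (m+q+1)` and the y-variable `y_b` by `b : Fin (m+p+1)`), with `I` the ideal
generated by the binomials `x_i y_j - x_j y_i` for `p ≤ i, j ≤ m + p`, the dimension of
the bidegree `(s,t)` piece of `R/I` satisfies
`dim + Σ_{ℓ=0}^{m−1} C(s+q+ℓ, q+ℓ)·C(t+p+m−1−ℓ, p+m−1−ℓ)
     = Σ_{ℓ=0}^{m} C(s+q+ℓ, q+ℓ)·C(t+p+m−ℓ, p+m−ℓ)`. -/
theorem dim_bideg_piece_determinantal (k : Type*) [Field k] (p q m s t : ℕ)
    (I : Ideal (MvPolynomial (Fin (m + q + 1) ⊕ Fin (m + p + 1)) k))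
    (hI : I = Ideal.span {f | ∃ i j : Fin (m + 1),
      f = X (Sum.inl ⟨(i : ℕ), by have := i.isLt; omega⟩)
            * X (Sum.inr ⟨p + (j : ℕ), by have := j.isLt; omega⟩)
          - X (Sum.inl ⟨(j : ℕ), by have := j.isLt; omega⟩)
            * X (Sum.inr ⟨p + (i : ℕ), by have := i.isLt; omega⟩)}) :
    Module.finrank k ((bidegPiece k (Fin (m + q + 1)) (Fin (m + p + 1)) s t).map
        (Ideal.Quotient.mkₐ k I).toLinearMap)
      + ∑ ℓ ∈ Finset.range m,
          (s + q + ℓ).choose (q + ℓ) * (t + (p + m - 1 - ℓ)).choose (p + m - 1 - ℓ)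
      = ∑ ℓ ∈ Finset.range (m + 1),
          (s + q + ℓ).choose (q + ℓ) * (t + (p + m - ℓ)).choose (p + m - ℓ) := by
  rw [finrank_eq_card hI]
  have h := double_count p q m s t
  have hF : ∀ ℓ ∈ range (m + 1), Nat.card {d : Fin (m + q + 1) ⊕ Fin (m + p + 1) →₀ ℕ //
          d ∈ BSet p q m s t ∧ condX p q m ℓ d ∧ condY p q m ℓ d}
      = (s + q + ℓ).choose (q + ℓ) * (t + (p + m - ℓ)).choose (p + m - ℓ) := by
    intro ℓ hℓ
    simp only [mem_range] at hℓ
    rw [cardS (by omega : ℓ ≤ m) (by omega : ℓ ≤ m + 1), chooseSymX]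
    congr 1
    have h1 : p + (m + 1 - ℓ) = (p + m - ℓ) + 1 := by omega
    rw [h1, chooseSymY]
  have hG : ∀ ℓ ∈ range m, Nat.card {d : Fin (m + q + 1) ⊕ Fin (m + p + 1) →₀ ℕ //
          d ∈ BSet p q m s t ∧ condX p q m ℓ d ∧ condY p q m (ℓ + 1) d}
      = (s + q + ℓ).choose (q + ℓ) * (t + (p + m - 1 - ℓ)).choose (p + m - 1 - ℓ) := by
    intro ℓ hℓ
    simp only [mem_range] at hℓ
    rw [cardS (by omega : ℓ ≤ m) (by omega : ℓ + 1 ≤ m + 1), chooseSymX]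
    congr 1
    have h1 : p + (m + 1 - (ℓ + 1)) = (p + m - 1 - ℓ) + 1 := by omega
    rw [h1, chooseSymY]
  rw [Finset.sum_congr rfl hF, Finset.sum_congr rfl hG] at h
  exact h

end Final
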